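/- If ⟨y^λ, y^0⟩ = δ_{λ,0} w for all λ, then the Y-matrix satisfies Σ_ρ (Y_{λ,ρ})* Y_{μ,ρ} = δ_{λ,μ} w; consequently S = w^{-1/2} Y is unitary. -/

import Mathlib

open Matrix

/-- If `⟨y^λ, y^0⟩ = δ_{λ,0} w` for all `λ`, then
`∑_ρ (Y_{λ,ρ})* Y_{μ,ρ} = δ_{λ,μ} w`; consequently `S = w^{-1/2} Y` is unitary. -/
theorem Y_orthogonality_and_S_unitary
    {Δ : Type*} [Fintype Δ] [DecidableEq Δ] (z0 : Δ) (bar : Δ → Δ)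
    (Nc : Δ → Δ → Δ → ℕ) (d : Δ → ℝ) (ω : Δ → ℂ) (Y : Δ → Δ → ℂ)
    (hNcomm : ∀ l m n, Nc l m n = Nc m l n)
    (hNid : ∀ l m, Nc z0 l m = if l = m then 1 else 0)
    (hFrob : ∀ l m n, Nc l m n = Nc (bar l) n m ∧ Nc l m n = Nc n (bar m) l)
    (hassoc : ∀ l n r s, ∑ m, Nc l m n * Nc r s m = ∑ t, Nc l r t * Nc t s n)
    (hd : ∀ l, 0 < d l) (hd0 : d z0 = 1) (hdbar : ∀ l, d (bar l) = d l)
    (hdim : ∀ l m, ∑ n, (Nc l m n : ℝ) * d n = d l * d m)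
    (hω : ∀ l, ‖ω l‖ = 1)
    (hY : ∀ m n, Y m n = ∑ l, (ω m * ω n / ω l) * (Nc m n l : ℂ) * (d l : ℂ))
    (hYsym : ∀ l m, Y l m = Y m l)
    (hYconj : ∀ l m, star (Y (bar l) m) = Y l m)
    (hYprod : ∀ n m r, Y n r * Y m r = (d r : ℂ) * ∑ l, (Nc m n l : ℂ) * Y r l)
    (hnondeg : ∀ l, ∑ m, star (Y l m) * (d m : ℂ) =
      if l = z0 then ((∑ n, d n ^ 2 : ℝ) : ℂ) else 0) :
    (∀ l m, ∑ r, star (Y l r) * Y m r =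
      if l = m then ((∑ n, d n ^ 2 : ℝ) : ℂ) else 0) ∧
    (let S : Matrix Δ Δ ℂ :=
      Matrix.of fun l m => Y l m / ((Real.sqrt (∑ n, d n ^ 2) : ℝ) : ℂ)
     Sᴴ * S = 1) := by
  set w : ℝ := ∑ n, d n ^ 2 with hw
  have hwpos : 0 < w := by
    apply Finset.sum_pos
    · intro i _; exact pow_pos (hd i) 2
    · exact ⟨z0, Finset.mem_univ z0⟩
  -- Nc m (bar l) z0 = δ_{l m}
  have Ndual : ∀ l m, Nc m (bar l) z0 = if l = m then 1 else 0 := by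
    intro l m
    rw [← (hFrob z0 l m).2, hNid]
  have barinj : Function.Injective bar := by
    intro a b hab
    have h1 : Nc a (bar b) z0 = 1 := by rw [← hab, Ndual a a, if_pos rfl]
    have h2 : Nc a (bar b) z0 = if b = a then 1 else 0 := Ndual b a
    rw [h1] at h2
    by_contra hne
    rw [if_neg (fun h => hne h.symm)] at h2
    omega
  have barz0 : bar z0 = z0 := by
    have h1 := Ndual z0 z0
    rw [hNid] at h1
    by_contra hne
    rw [if_neg hne, if_pos rfl] at h1
    omega
  have barbar : ∀ l, bar (bar l) = l := by
    intro l
    obtain ⟨k, hk⟩ := (Finite.injective_iff_surjective.mp barinj) l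
    have h1 : Nc (bar l) (bar k) z0 = if k = bar l then 1 else 0 := Ndual k (bar l)
    have h2 : Nc (bar l) (bar k) z0 = 1 := by
      rw [hk, hNcomm]
      have := Ndual l l; simpa using this
    rw [h2] at h1
    have hkl : k = bar l := by
      by_contra hne
      rw [if_neg hne] at h1
      omega
    rw [← hkl, hk]
  have barz0iff : ∀ t, bar t = z0 ↔ t = z0 := by
    intro t
    constructor
    · intro h; have := congrArg bar h; rwa [barbar, barz0] at this
    · intro h; rw [h, barz0]
  -- key orthogonality
  have key : ∀ l m, ∑ r, star (Y l r) * Y m r = if l = m then (w : ℂ) else 0 := by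
    intro l m
    have step1 : ∀ r, star (Y l r) * Y m r
        = ∑ t, (Nc m (bar l) t : ℂ) * ((d r : ℂ) * Y r t) := by
      intro r
      have e : star (Y l r) = Y (bar l) r := by rw [← hYconj l r, star_star]
      rw [e, hYprod (bar l) m r, Finset.mul_sum]
      congr 1; ext t; ring
    calc ∑ r, star (Y l r) * Y m r
        = ∑ r, ∑ t, (Nc m (bar l) t : ℂ) * ((d r : ℂ) * Y r t) := by
          exact Finset.sum_congr rfl fun r _ => step1 r
      _ = ∑ t, (Nc m (bar l) t : ℂ) * ∑ r, (d r : ℂ) * Y r t := by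
          rw [Finset.sum_comm]
          exact Finset.sum_congr rfl fun t _ => (Finset.mul_sum _ _ _).symm
      _ = ∑ t, (Nc m (bar l) t : ℂ) * (if t = z0 then (w : ℂ) else 0) := by
          apply Finset.sum_congr rfl
          intro t _
          congr 1
          have : ∀ r, (d r : ℂ) * Y r t = star (Y (bar t) r) * (d r : ℂ) := by
            intro r
            rw [hYconj t r, hYsym t r]; ring
          rw [Finset.sum_congr rfl fun r _ => this r, hnondeg (bar t)]
          simp [barz0iff t]
      _ = (Nc m (bar l) z0 : ℂ) * (w : ℂ) := by
          simp only [mul_ite, mul_zero, Finset.sum_ite_eq', Finset.mem_univ, if_true]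
      _ = if l = m then (w : ℂ) else 0 := by
          rw [Ndual l m]
          split <;> simp
  refine ⟨key, ?_⟩
  intro S
  have hsq : ((Real.sqrt w : ℝ) : ℂ) * ((Real.sqrt w : ℝ) : ℂ) = (w : ℂ) := by
    rw [← Complex.ofReal_mul, Real.mul_self_sqrt hwpos.le]
  have hwne : (w : ℂ) ≠ 0 := by
    exact_mod_cast ne_of_gt hwpos
  ext l m
  rw [Matrix.mul_apply]
  have : ∀ r, (Sᴴ l r) * (S r m) = star (Y l r) * Y m r / (w : ℂ) := by
    intro r
    simp only [S, Matrix.conjTranspose_apply, Matrix.of_apply]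
    rw [star_div₀, Complex.star_def, Complex.conj_ofReal, div_mul_div_comm, hsq,
      hYsym r m, ← hYsym l r]
  rw [Finset.sum_congr rfl fun r _ => this r, ← Finset.sum_div, key l m]
  by_cases h : l = m
  · simp [h, Matrix.one_apply, hwne]
  · simp [h, Matrix.one_apply]
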